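/- For any integers f ≥ 1 and a ≥ 2, with n = 5f+1 and h = 4f+1, if C coalition members produce a branches (quorums of size ≥ h) where honest players each join at most one branch and coalition members at most a branches, then the number x of coalition members appearing in at most one branch satisfies x ≤ ⌊(a·n − a·h − n + C)/(a−1)⌋. -/
import Mathlib


/-- General covering bound: with n = 5f+1, h = 4f+1, a ≥ 2 branches of size ≥ h,
honest players in at most one branch and coalition members in at most a, the
number x of coalition members appearing in at most one branch satisfies
x ≤ ⌊(a·n − a·h − n + C)/(a−1)⌋. -/
theorem stmt6 (f a : ℕ) (hf : 1 ≤ f) (ha : 2 ≤ a)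
    (α : Type) [Fintype α] [DecidableEq α]
    (hcard : Fintype.card α = 5 * f + 1)
    (co : Finset α) (C : ℕ) (hco : co.card = C)
    (Q : Fin a → Finset α) (hQ : ∀ i, 4 * f + 1 ≤ (Q i).card)
    (honest : ∀ x, x ∉ co → (Finset.univ.filter fun i => x ∈ Q i).card ≤ 1)
    (coal : ∀ x, x ∈ co → (Finset.univ.filter fun i => x ∈ Q i).card ≤ a) :
    ((co.filter fun c => (Finset.univ.filter fun i => c ∈ Q i).card ≤ 1).card : ℤ)
      ≤ ⌊((a * (5 * f + 1) - a * (4 * f + 1) - (5 * f + 1) + C : ℚ)) / (a - 1)⌋ := by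
  classical
  set deg : α → ℕ := fun v => (Finset.univ.filter fun i => v ∈ Q i).card with hdeg
  set F := co.filter fun c => deg c ≤ 1 with hF
  -- double counting
  have hswap : ∑ i : Fin a, (Q i).card = ∑ v : α, deg v := by
    calc ∑ i : Fin a, (Q i).card
        = ∑ i : Fin a, ∑ v : α, (if v ∈ Q i then 1 else 0) := by
          refine Finset.sum_congr rfl fun i _ => ?_
          rw [← Finset.card_filter]
          congr 1
          ext v; simp
      _ = ∑ v : α, ∑ i : Fin a, (if v ∈ Q i then 1 else 0) := Finset.sum_comm
      _ = ∑ v : α, deg v := by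
          refine Finset.sum_congr rfl fun v _ => ?_
          simp only [hdeg, Finset.card_filter]
  have h1 : a * (4 * f + 1) ≤ ∑ v : α, deg v := by
    rw [← hswap]
    calc a * (4 * f + 1) = ∑ _i : Fin a, (4 * f + 1) := by
          simp [Finset.sum_const, mul_comm]
      _ ≤ ∑ i : Fin a, (Q i).card := Finset.sum_le_sum fun i _ => hQ i
  -- split sum over co and its complement
  have hsplit : ∑ v : α, deg v = ∑ v ∈ co, deg v + ∑ v ∈ coᶜ, deg v := by
    rw [← Finset.sum_add_sum_compl co]
  have hcompl : ∑ v ∈ coᶜ, deg v ≤ coᶜ.card := by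
    rw [Finset.card_eq_sum_ones]
    exact Finset.sum_le_sum fun v hv => honest v (by simpa using hv)
  have hsdiff : co \ F = co.filter (fun c => ¬ deg c ≤ 1) := by
    rw [hF, Finset.sdiff_eq_filter]
    ext v; simp; tauto
  have hcoSplit : ∑ v ∈ co, deg v = ∑ v ∈ F, deg v + ∑ v ∈ co \ F, deg v := by
    rw [hsdiff, hF, Finset.sum_filter_add_sum_filter_not co (fun c => deg c ≤ 1)]
  have hFle : ∑ v ∈ F, deg v ≤ F.card := by
    rw [Finset.card_eq_sum_ones]
    exact Finset.sum_le_sum fun v hv => (Finset.mem_filter.mp hv).2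
  have hrest : ∑ v ∈ co \ F, deg v ≤ a * (co \ F).card := by
    calc ∑ v ∈ co \ F, deg v ≤ ∑ _v ∈ co \ F, a :=
          Finset.sum_le_sum fun v hv => coal v (Finset.mem_sdiff.mp hv).1
      _ = a * (co \ F).card := by simp [mul_comm]
  have hkey : a * (4 * f + 1) ≤ coᶜ.card + F.card + a * (co \ F).card := by
    omega
  -- cardinal facts
  have hFsub : F ⊆ co := Finset.filter_subset _ _
  have hsd : (co \ F).card = C - F.card := by
    rw [Finset.card_sdiff_of_subset hFsub, hco]
  have hxC : F.card ≤ C := hco ▸ Finset.card_le_card hFsub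
  have hCn : C ≤ 5 * f + 1 := by
    rw [← hco, ← hcard]; exact Finset.card_le_univ co
  have hcc : coᶜ.card = 5 * f + 1 - C := by
    rw [Finset.card_compl, hco, hcard]
  -- integer inequality
  have hint : (a - 1 : ℤ) * F.card ≤ a * (5 * f + 1) - a * (4 * f + 1) - (5 * f + 1) + C := by
    have := hkey
    rw [hcc, hsd] at this
    have h2 : a * (4 * f + 1) ≤ (5 * f + 1 - C) + F.card + a * (C - F.card) := this
    -- convert to ℤ
    have : (a : ℤ) * (4 * f + 1) ≤ ((5 * f + 1) - C) + F.card + a * (C - F.card) := by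
      push_cast [hxC, hCn]
      exact_mod_cast h2
    nlinarith [hxC, hCn, ha, (Nat.cast_le (α := ℤ)).2 hxC, (Nat.cast_le (α := ℤ)).2 hCn,
      (Nat.cast_le (α := ℤ)).2 ha]
  rw [Int.le_floor]
  have hapos : (0 : ℚ) < (a : ℚ) - 1 := by
    have : (2 : ℚ) ≤ a := by exact_mod_cast ha
    linarith
  rw [le_div_iff₀ hapos]
  have hq : ((((a : ℤ) - 1) * F.card : ℤ) : ℚ)
      ≤ ((a * (5 * f + 1) - a * (4 * f + 1) - (5 * f + 1) + C : ℤ) : ℚ) :=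
    Int.cast_le.2 hint
  push_cast at hq ⊢
  linarith
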